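/- Let n ≥ 2 be an integer and β ≥ n − 1/2. Define for 1 ≤ r < R the function ρ(r) = δ(R)/2 + (β δ(R) r/2)·((R/r)^(2n−2) Γ(R/r))/((R/r)^(n−1) − 1) − (δ(R) r/(2n))·(β − (n−1)/R)·((R/r)^n − 1)/((R/r)^(n−1) − 1), where Γ and δ are as usual. Then ρ is strictly decreasing on [1, R), lim_{r→R} ρ(r) = δ(R), and consequently ρ(r) ≥ δ(R) for all r ∈ [1, R). -/

import Mathlib

noncomputable def Gam (n : ℕ) (r : ℝ) : ℝ :=
  if n = 2 then Real.log r else (1 / ((n : ℝ) - 2)) * (1 - r ^ ((2 : ℝ) - (n : ℝ)))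

noncomputable def del (n : ℕ) (β r : ℝ) : ℝ :=
  1 / (1 + β * r ^ ((n : ℝ) - 1) * Gam n r)

noncomputable def rho (n : ℕ) (β R r : ℝ) : ℝ :=
  del n β R / 2 +
    (β * del n β R * r / 2) *
      ((R / r) ^ (2 * (n : ℝ) - 2) * Gam n (R / r) / ((R / r) ^ ((n : ℝ) - 1) - 1)) -
    (del n β R * r / (2 * n)) * (β - ((n : ℝ) - 1) / R) *
      (((R / r) ^ (n : ℝ) - 1) / ((R / r) ^ ((n : ℝ) - 1) - 1))

open Finset Filter Real Set

noncomputable def gfun (n : ℕ) (s : ℝ) : ℝ :=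
  if n = 2 then s * Real.log s / (s - 1)
  else (s ^ (2*n-3) - s ^ (n-1)) / (((n:ℝ) - 2) * (s ^ (n-1) - 1))

noncomputable def qfun (n : ℕ) (s : ℝ) : ℝ := (s ^ n - 1) / (s * (s ^ (n-1) - 1))

lemma Epos {n : ℕ} (hn : 2 ≤ n) {s : ℝ} (hs : 0 < s) :
    0 < s * ∑ i ∈ range (n-1), s ^ i := by
  apply mul_pos hs
  apply Finset.sum_pos (fun i _ => pow_pos hs i)
  exact ⟨0, Finset.mem_range.2 (by omega)⟩

lemma qfun_eq {n : ℕ} (hn : 2 ≤ n) {s : ℝ} (hs : 1 < s) :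
    qfun n s = 1 + 1 / (s * ∑ i ∈ range (n-1), s ^ i) := by
  have hs1 : s - 1 ≠ 0 := sub_ne_zero.2 hs.ne'
  have hE := (Epos hn (show (0:ℝ) < s by linarith)).ne'
  set B := ∑ i ∈ range (n-1), s ^ i with hB
  have h1 : s ^ (n-1) - 1 = B * (s - 1) := (geom_sum_mul s (n-1)).symm
  have h2 : s ^ n - 1 = (s * B + 1) * (s - 1) := by
    rw [← geom_sum_mul s n, show n = (n-1)+1 by omega, geom_sum_succ]
  rw [qfun, h1, h2, show s * (B * (s-1)) = (s*B) * (s-1) by ring,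
    mul_div_mul_right _ _ hs1, add_div, div_self hE, one_div, add_comm]

lemma qfun_anti {n : ℕ} (hn : 2 ≤ n) {s t : ℝ} (hs : 1 < s) (hst : s < t) :
    qfun n t < qfun n s := by
  rw [qfun_eq hn hs, qfun_eq hn (hs.trans hst)]
  have h1 : s * ∑ i ∈ range (n-1), s ^ i < t * ∑ i ∈ range (n-1), t ^ i := by
    apply mul_lt_mul hst (Finset.sum_le_sum fun i _ => pow_le_pow_left₀ (by linarith) hst.le i)
    · exact Finset.sum_pos (fun i _ => pow_pos (by linarith) i) ⟨0, Finset.mem_range.2 (by omega)⟩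
    · linarith
  exact (add_lt_add_iff_left 1).2
    (one_div_lt_one_div_of_lt (Epos hn (show (0:ℝ) < s by linarith)) h1)

lemma gfun_eq (m : ℕ) {s : ℝ} (hs1 : s ≠ 1) :
    gfun (m+3) s = s ^ (m+2) * (∑ i ∈ range (m+1), s ^ i) /
      (((m:ℝ)+1) * ∑ i ∈ range (m+2), s ^ i) := by
  have h1 : s - 1 ≠ 0 := sub_ne_zero.2 hs1
  rw [gfun, if_neg (by omega), show 2*(m+3)-3 = 2*m+3 by omega, show m+3-1 = m+2 by omega]
  have hnum : s ^ (2*m+3) - s ^ (m+2) = (s ^ (m+2) * ∑ i ∈ range (m+1), s ^ i) * (s - 1) := by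
    rw [mul_assoc, geom_sum_mul]
    ring
  have hden : ((m+3:ℕ):ℝ) - 2 = (m:ℝ)+1 := by push_cast; ring
  rw [hnum, hden, ← geom_sum_mul s (m+2),
    show ((m:ℝ)+1) * ((∑ i ∈ range (m+2), s ^ i) * (s-1))
      = (((m:ℝ)+1) * ∑ i ∈ range (m+2), s ^ i) * (s-1) by ring,
    mul_div_mul_right _ _ h1]

lemma key (m : ℕ) {s t : ℝ} (hs : 1 < s) (hst : s < t) :
    (s ^ (m+2) * ∑ i ∈ range (m+1), s ^ i) * (((m:ℝ)+1) * ∑ j ∈ range (m+2), t ^ j)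
      < (t ^ (m+2) * ∑ i ∈ range (m+1), t ^ i) * (((m:ℝ)+1) * ∑ j ∈ range (m+2), s ^ j) := by
  have hm : (0:ℝ) < (m:ℝ)+1 := by positivity
  rw [show (s ^ (m+2) * ∑ i ∈ range (m+1), s ^ i) * (((m:ℝ)+1) * ∑ j ∈ range (m+2), t ^ j)
      = ((m:ℝ)+1) * ((∑ i ∈ range (m+1), s ^ (m+2) * s ^ i) * ∑ j ∈ range (m+2), t ^ j) by
        rw [← Finset.mul_sum]; ring,
    show (t ^ (m+2) * ∑ i ∈ range (m+1), t ^ i) * (((m:ℝ)+1) * ∑ j ∈ range (m+2), s ^ j)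
      = ((m:ℝ)+1) * ((∑ i ∈ range (m+1), t ^ (m+2) * t ^ i) * ∑ j ∈ range (m+2), s ^ j) by
        rw [← Finset.mul_sum]; ring]
  apply mul_lt_mul_of_pos_left _ hm
  rw [Finset.sum_mul_sum, Finset.sum_mul_sum]
  apply Finset.sum_lt_sum_of_nonempty ⟨0, Finset.mem_range.2 (by omega)⟩
  intro i _
  apply Finset.sum_lt_sum_of_nonempty ⟨0, Finset.mem_range.2 (by omega)⟩
  intro j hj
  have hj' : j ≤ m+1 := by simpa [Nat.lt_succ_iff] using Finset.mem_range.1 hj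
  have hd : m+2+i = j + (m+2+i-j) := by omega
  have h0s : (0:ℝ) < s := by linarith
  rw [← pow_add, ← pow_add, hd, pow_add, pow_add]
  have hdpow : s ^ (m+2+i-j) < t ^ (m+2+i-j) :=
    pow_lt_pow_left₀ hst h0s.le (by omega)
  calc s ^ j * s ^ (m+2+i-j) * t ^ j = (s ^ j * t ^ j) * s ^ (m+2+i-j) := by ring
    _ < (s ^ j * t ^ j) * t ^ (m+2+i-j) := by
        apply mul_lt_mul_of_pos_left hdpow (mul_pos (pow_pos h0s j) (pow_pos (by linarith : (0:ℝ) < t) j))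
    _ = t ^ j * t ^ (m+2+i-j) * s ^ j := by ring

lemma gfun_mono3 (m : ℕ) {s t : ℝ} (hs : 1 < s) (hst : s < t) :
    gfun (m+3) s < gfun (m+3) t := by
  have h0s : (0:ℝ) < s := by linarith
  have h0t : (0:ℝ) < t := by linarith
  rw [gfun_eq m hs.ne', gfun_eq m (hs.trans hst).ne']
  have hBs : (0:ℝ) < ((m:ℝ)+1) * ∑ i ∈ range (m+2), s ^ i := by
    have : (0:ℝ) < ∑ i ∈ range (m+2), s ^ i :=
      Finset.sum_pos (fun i _ => pow_pos h0s i) ⟨0, Finset.mem_range.2 (by omega)⟩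
    positivity
  have hBt : (0:ℝ) < ((m:ℝ)+1) * ∑ i ∈ range (m+2), t ^ i := by
    have : (0:ℝ) < ∑ i ∈ range (m+2), t ^ i :=
      Finset.sum_pos (fun i _ => pow_pos h0t i) ⟨0, Finset.mem_range.2 (by omega)⟩
    positivity
  rw [div_lt_div_iff₀ hBs hBt]
  exact key m hs hst

lemma g2deriv {x : ℝ} (hx : 1 < x) :
    HasDerivAt (fun s : ℝ => s * Real.log s / (s - 1))
      (((Real.log x + 1) * (x-1) - x * Real.log x * 1) / (x-1)^2) x := by
  have h0 : x ≠ 0 := by linarith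
  have h1 : HasDerivAt (fun s : ℝ => s * Real.log s) (Real.log x + 1) x := by
    have := (hasDerivAt_id' x).mul (Real.hasDerivAt_log h0)
    rw [mul_inv_cancel₀ h0, one_mul] at this; exact this
  have h2 : HasDerivAt (fun s : ℝ => s - 1) 1 x := (hasDerivAt_id x).sub_const 1
  exact h1.div h2 (sub_ne_zero.2 (by linarith))

lemma gfun_mono2 : StrictMonoOn (fun s : ℝ => s * Real.log s / (s - 1)) (Set.Ioi 1) := by
  apply strictMonoOn_of_deriv_pos (convex_Ioi 1)
  · apply ContinuousOn.div
    · exact (continuousOn_id.mul (Real.continuousOn_log.mono (by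
        intro x hx; simp at hx ⊢; intro h; simp [h] at hx; linarith)))
    · exact (continuous_id.sub continuous_const).continuousOn
    · intro x hx; exact sub_ne_zero.2 (ne_of_gt (by exact hx))
  · intro x hx
    rw [interior_Ioi] at hx
    have hx' : 1 < x := hx
    rw [(g2deriv hx').deriv]
    have hlog : Real.log x < x - 1 := Real.log_lt_sub_one_of_pos (by linarith) (ne_of_gt hx')
    have : (0:ℝ) < (x-1)^2 := pow_pos (by linarith) 2
    apply div_pos _ this
    nlinarith

lemma gfun_two (s : ℝ) : gfun 2 s = s * Real.log s / (s - 1) := if_pos rfl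

lemma gfun_mono {n : ℕ} (hn : 2 ≤ n) {s t : ℝ} (hs : 1 < s) (hst : s < t) :
    gfun n s < gfun n t := by
  rcases eq_or_ne n 2 with h2 | h2
  · subst h2
    rw [gfun_two, gfun_two]
    exact gfun_mono2 hs (show t ∈ Set.Ioi (1:ℝ) from hs.trans hst) hst
  · obtain ⟨m, rfl⟩ : ∃ m, n = m + 3 := ⟨n - 3, by omega⟩
    exact gfun_mono3 m hs hst

lemma glim2 : Tendsto (fun s : ℝ => s * Real.log s / (s - 1)) (nhdsWithin 1 (Set.Ioi 1)) (nhds 1) := by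
  have h1 : Tendsto (slope Real.log 1) (nhdsWithin 1 {(1:ℝ)}ᶜ) (nhds 1) := by
    have := hasDerivAt_iff_tendsto_slope.1 (Real.hasDerivAt_log one_ne_zero)
    simpa using this
  have h2 : Tendsto (slope Real.log 1) (nhdsWithin 1 (Set.Ioi 1)) (nhds 1) :=
    h1.mono_left (nhdsWithin_mono 1 (fun x hx => ne_of_gt hx))
  have h3 : Tendsto (fun s : ℝ => s * slope Real.log 1 s) (nhdsWithin 1 (Set.Ioi 1)) (nhds 1) := by
    simpa using ((continuous_id.tendsto (1:ℝ)).mono_left nhdsWithin_le_nhds).mul h2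
  apply h3.congr'
  filter_upwards [self_mem_nhdsWithin] with s hs
  have : s ≠ 1 := ne_of_gt hs
  rw [slope_def_field, Real.log_one, sub_zero, mul_div_assoc]

lemma sum_pow_cont (k : ℕ) : Continuous (fun s : ℝ => ∑ i ∈ range k, s ^ i) :=
  continuous_finset_sum _ (fun i _ => continuous_pow i)

lemma sum_pow_one (k : ℕ) : (∑ i ∈ range k, (1:ℝ) ^ i) = k := by simp

lemma qlim {n : ℕ} (hn : 2 ≤ n) :
    Tendsto (fun s : ℝ => (1 : ℝ) + 1 / (s * ∑ i ∈ range (n-1), s ^ i)) (nhdsWithin 1 (Set.Ioi 1))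
      (nhds ((n:ℝ) / ((n:ℝ) - 1))) := by
  have hn1 : ((n-1:ℕ):ℝ) = (n:ℝ) - 1 := by push_cast [Nat.cast_sub (by omega : 1 ≤ n)]; ring
  have hne : ((n:ℝ) - 1) ≠ 0 := by
    have : (2:ℝ) ≤ (n:ℝ) := by exact_mod_cast hn
    linarith
  have hden : ((1:ℝ) * ∑ i ∈ range (n-1), (1:ℝ) ^ i) ≠ 0 := by
    rw [sum_pow_one, one_mul, hn1]; exact hne
  have hc : ContinuousAt (fun s : ℝ => (1 : ℝ) + 1 / (s * ∑ i ∈ range (n-1), s ^ i)) 1 :=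
    ContinuousAt.add continuousAt_const
      (ContinuousAt.div continuousAt_const (continuous_id.mul (sum_pow_cont (n-1))).continuousAt hden)
  have hval : (1 : ℝ) + 1 / ((1:ℝ) * ∑ i ∈ range (n-1), (1:ℝ) ^ i) = (n:ℝ) / ((n:ℝ) - 1) := by
    rw [sum_pow_one, one_mul, hn1]
    field_simp
    ring
  have h := hc.tendsto.mono_left (nhdsWithin_le_nhds (s := Set.Ioi (1:ℝ)))
  convert h using 2
  exact hval.symm

lemma qfun_lim {n : ℕ} (hn : 2 ≤ n) :
    Tendsto (qfun n) (nhdsWithin 1 (Set.Ioi 1)) (nhds ((n:ℝ) / ((n:ℝ) - 1))) := by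
  apply (qlim hn).congr'
  filter_upwards [self_mem_nhdsWithin] with s hs
  exact (qfun_eq hn hs).symm

lemma glim3 (m : ℕ) :
    Tendsto (fun s : ℝ => s ^ (m+2) * (∑ i ∈ range (m+1), s ^ i) /
      (((m:ℝ)+1) * ∑ i ∈ range (m+2), s ^ i)) (nhdsWithin 1 (Set.Ioi 1))
      (nhds (1 / ((m:ℝ)+2))) := by
  have hden : (((m:ℝ)+1) * ∑ i ∈ range (m+2), (1:ℝ) ^ i) ≠ 0 := by
    rw [sum_pow_one]; positivity
  have hc : ContinuousAt (fun s : ℝ => s ^ (m+2) * (∑ i ∈ range (m+1), s ^ i) /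
      (((m:ℝ)+1) * ∑ i ∈ range (m+2), s ^ i)) 1 :=
    ContinuousAt.div ((continuous_pow (m+2)).mul (sum_pow_cont (m+1))).continuousAt
      (continuous_const.mul (sum_pow_cont (m+2))).continuousAt hden
  have hval : (1:ℝ) ^ (m+2) * (∑ i ∈ range (m+1), (1:ℝ) ^ i) /
      (((m:ℝ)+1) * ∑ i ∈ range (m+2), (1:ℝ) ^ i) = 1 / ((m:ℝ)+2) := by
    rw [sum_pow_one, sum_pow_one, one_pow, one_mul]
    push_cast
    rw [div_eq_div_iff (by positivity) (by positivity)]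
    ring
  have h := hc.tendsto.mono_left (nhdsWithin_le_nhds (s := Set.Ioi (1:ℝ)))
  convert h using 2
  exact hval.symm

lemma gfun_lim {n : ℕ} (hn : 2 ≤ n) :
    Tendsto (gfun n) (nhdsWithin 1 (Set.Ioi 1)) (nhds (1 / ((n:ℝ) - 1))) := by
  rcases eq_or_ne n 2 with h2 | h2
  · subst h2
    have : (1 : ℝ) / (((2:ℕ):ℝ) - 1) = 1 := by norm_num
    rw [this]
    apply glim2.congr'
    filter_upwards [self_mem_nhdsWithin] with s _
    exact (gfun_two s).symm
  · obtain ⟨m, rfl⟩ : ∃ m, n = m + 3 := ⟨n - 3, by omega⟩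
    have hcast : ((m+3:ℕ):ℝ) - 1 = (m:ℝ) + 2 := by push_cast; ring
    rw [hcast]
    apply (glim3 m).congr'
    filter_upwards [self_mem_nhdsWithin] with s hs
    exact (gfun_eq m (ne_of_gt hs)).symm

lemma Gam_pos {n : ℕ} (hn : 2 ≤ n) {R : ℝ} (hR : 1 < R) : 0 < Gam n R := by
  rcases eq_or_ne n 2 with h2 | h2
  · subst h2; rw [Gam, if_pos rfl]; exact Real.log_pos hR
  · rw [Gam, if_neg h2]
    have hn3 : 3 ≤ n := by omega
    have hne : (0:ℝ) < (n:ℝ) - 2 := by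
      have : (3:ℝ) ≤ (n:ℝ) := by exact_mod_cast hn3
      linarith
    have hlt : R ^ ((2:ℝ) - (n:ℝ)) < 1 :=
      Real.rpow_lt_one_of_one_lt_of_neg hR (by linarith)
    have h1 : (0:ℝ) < 1 / ((n:ℝ) - 2) := by positivity
    exact mul_pos h1 (by linarith)

lemma del_pos {n : ℕ} (hn : 2 ≤ n) {β R : ℝ} (hβ : (n : ℝ) - 1 / 2 ≤ β) (hR : 1 < R) :
    0 < del n β R := by
  have hn2 : (2:ℝ) ≤ (n:ℝ) := by exact_mod_cast hn
  have hb : 0 < β := by linarith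
  have h1 : 0 < R ^ ((n:ℝ) - 1) := Real.rpow_pos_of_pos (by linarith) _
  have h2 : 0 < Gam n R := Gam_pos hn hR
  rw [del]
  positivity

lemma rho_eq (n : ℕ) (hn : 2 ≤ n) (β R : ℝ) {r : ℝ} (hr : 0 < r) (hrR : r < R) :
    rho n β R r = del n β R / 2 + (β * del n β R * R / 2) * gfun n (R / r)
      - (del n β R * R / (2 * n)) * (β - ((n:ℝ) - 1) / R) * qfun n (R / r) := by
  have hs : 1 < R / r := (one_lt_div hr).2 hrR
  have hs0 : 0 < R / r := by linarith
  set s := R / r with hsdef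
  have hrs : r * s = R := by rw [hsdef]; field_simp
  have hs1 : s - 1 ≠ 0 := sub_ne_zero.2 hs.ne'
  have e1 : s ^ (2 * (n:ℝ) - 2) = s ^ (2*n-2 : ℕ) := by
    rw [← Real.rpow_natCast s (2*n-2)]
    congr 1
    rw [Nat.cast_sub (by omega : 2 ≤ 2*n)]
    push_cast; ring
  have e2 : s ^ ((n:ℝ) - 1) = s ^ (n-1 : ℕ) := by
    rw [← Real.rpow_natCast s (n-1)]
    congr 1
    rw [Nat.cast_sub (by omega : 1 ≤ n)]
    push_cast; ring
  have e3 : s ^ ((n:ℝ)) = s ^ (n : ℕ) := Real.rpow_natCast s n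
  have hpow1 : s ^ (n-1 : ℕ) - 1 ≠ 0 :=
    sub_ne_zero.2 (one_lt_pow₀ hs (by omega : n - 1 ≠ 0)).ne'
  rw [rho, e1, e2, e3]
  rcases eq_or_ne n 2 with h2 | h2
  · subst h2
    rw [Gam, if_pos rfl, gfun, if_pos rfl, qfun]
    norm_num
    rw [← hrs]
    have hsne : s ≠ 0 := by linarith
    have hrne : r ≠ 0 := hr.ne'
    field_simp
  · obtain ⟨m, rfl⟩ : ∃ m, n = m + 3 := ⟨n - 3, by omega⟩
    rw [Gam, if_neg h2, gfun, if_neg h2, qfun]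
    have hc : ((2:ℝ) - ((m+3:ℕ):ℝ)) = -(((m+1:ℕ)):ℝ) := by push_cast; ring
    rw [hc, Real.rpow_neg hs0.le, Real.rpow_natCast]
    rw [show (m+3) - 1 = m+2 by omega, show 2*(m+3) - 2 = 2*m+4 by omega,
      show 2*(m+3) - 3 = 2*m+3 by omega] at *
    have hsne : s ≠ 0 := by linarith
    have hrne : r ≠ 0 := hr.ne'
    have hcast : ((m+3:ℕ):ℝ) - 2 = (m:ℝ) + 1 := by push_cast; ring
    rw [hcast, ← hrs]
    have hspow : s ^ (m+1) ≠ 0 := pow_ne_zero _ hsne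
    have hm1 : ((m:ℝ) + 1) ≠ 0 := by positivity
    field_simp
    ring

theorem stmt_18 (n : ℕ) (hn : 2 ≤ n) (β R : ℝ) (hβ : (n : ℝ) - 1 / 2 ≤ β) (hR : 1 < R) :
    StrictAntiOn (fun r : ℝ => rho n β R r) (Set.Ico 1 R) ∧
      Filter.Tendsto (fun r : ℝ => rho n β R r) (nhdsWithin R (Set.Iio R))
        (nhds (del n β R)) ∧
      ∀ r ∈ Set.Ico (1 : ℝ) R, del n β R ≤ rho n β R r := by
  have hn2 : (2:ℝ) ≤ (n:ℝ) := by exact_mod_cast hn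
  have hR0 : (0:ℝ) < R := by linarith
  have hb : 0 < β := by linarith
  have hd : 0 < del n β R := del_pos hn hβ hR
  have hn0 : (0:ℝ) < (n:ℝ) := by linarith
  have hβn : ((n:ℝ) - 1) / R < β := by
    have h1 : ((n:ℝ) - 1) / R < (n:ℝ) - 1 := div_lt_self (by linarith) hR
    linarith
  have hB : 0 < β * del n β R * R / 2 := by positivity
  have hC : 0 < del n β R * R / (2 * (n:ℝ)) * (β - ((n:ℝ) - 1) / R) := by
    apply mul_pos (by positivity) (by linarith)
  have hanti : StrictAntiOn (fun r : ℝ => rho n β R r) (Set.Ico 1 R) := by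
    intro r₁ h₁ r₂ h₂ h12
    have hr₁ : (0:ℝ) < r₁ := lt_of_lt_of_le one_pos h₁.1
    have hr₂ : (0:ℝ) < r₂ := lt_of_lt_of_le one_pos h₂.1
    simp only
    rw [rho_eq n hn β R hr₁ h₁.2, rho_eq n hn β R hr₂ h₂.2]
    have hs₂ : 1 < R / r₂ := (one_lt_div hr₂).2 h₂.2
    have hs21 : R / r₂ < R / r₁ := div_lt_div_of_pos_left hR0 hr₁ h12
    have hg := gfun_mono hn hs₂ hs21
    have hq := qfun_anti hn hs₂ hs21
    have h1 := mul_lt_mul_of_pos_left hg hB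
    have h2 := mul_lt_mul_of_pos_left hq hC
    linarith
  have hcomp : Tendsto (fun r : ℝ => R / r) (nhdsWithin R (Set.Iio R))
      (nhdsWithin 1 (Set.Ioi 1)) := by
    rw [tendsto_nhdsWithin_iff]
    constructor
    · have h1 : Tendsto (fun r : ℝ => R / r) (nhds R) (nhds (R / R)) :=
        (continuousAt_const.div continuousAt_id hR0.ne')
      rw [div_self hR0.ne'] at h1
      exact h1.mono_left nhdsWithin_le_nhds
    · filter_upwards [Ioo_mem_nhdsLT_of_mem (show R ∈ Set.Ioc 0 R from ⟨hR0, le_refl R⟩)]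
        with x hx
      exact (one_lt_div hx.1).2 hx.2
  have hglim := (gfun_lim hn).comp hcomp
  have hqlim := (qfun_lim hn).comp hcomp
  have hn1 : ((n:ℝ) - 1) ≠ 0 := by linarith
  have heq : del n β R / 2 + (β * del n β R * R / 2) * (1 / ((n:ℝ) - 1))
      - (del n β R * R / (2 * (n:ℝ))) * (β - ((n:ℝ) - 1) / R) * ((n:ℝ) / ((n:ℝ) - 1))
      = del n β R := by
    field_simp
    ring
  have htend : Tendsto (fun r : ℝ => rho n β R r) (nhdsWithin R (Set.Iio R))
      (nhds (del n β R)) := by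
    have h1 : Tendsto (fun r : ℝ => del n β R / 2 + (β * del n β R * R / 2) * gfun n (R / r)
        - (del n β R * R / (2 * (n:ℝ))) * (β - ((n:ℝ) - 1) / R) * qfun n (R / r))
        (nhdsWithin R (Set.Iio R))
        (nhds (del n β R / 2 + (β * del n β R * R / 2) * (1 / ((n:ℝ) - 1))
          - (del n β R * R / (2 * (n:ℝ))) * (β - ((n:ℝ) - 1) / R) * ((n:ℝ) / ((n:ℝ) - 1)))) :=
      (tendsto_const_nhds.add (hglim.const_mul _)).sub (hqlim.const_mul _)
    rw [heq] at h1
    apply h1.congr'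
    filter_upwards [Ioo_mem_nhdsLT_of_mem (show R ∈ Set.Ioc 0 R from ⟨hR0, le_refl R⟩)]
      with x hx
    exact (rho_eq n hn β R hx.1 hx.2).symm
  refine ⟨hanti, htend, ?_⟩
  intro r hr
  refine le_of_tendsto htend ?_
  filter_upwards [Ioo_mem_nhdsLT_of_mem (show R ∈ Set.Ioc r R from ⟨hr.2, le_refl R⟩)]
    with x hx
  exact (hanti hr ⟨le_trans hr.1 hx.1.le, hx.2⟩ hx.1).le
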